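/- Let m, N ≥ 1, let g be a symmetric invertible real m×m matrix with inverse entries g^{ab}, let s > 0 be real and μ ∈ ℂ, let γ_a be arbitrary N×N complex matrices (a ∈ Fin m), γ^a := Σ_b g^{ab} γ_b, and let ψ ∈ ℂ^N (column), ψ̄ ∈ ℂ^N (row) and arrays D_a ψ ∈ ℂ^N, D_a ψ̄ ∈ ℂ^N be arbitrary. Define ℓ := ((i/2) Σ_{a,b} g^{ab} (ψ̄ γ_a D_b ψ − D_a ψ̄ γ_b ψ) − μ ψ̄ ψ) s, T_{ab} := (i/4)(ψ̄ γ_a D_b ψ + ψ̄ γ_b D_a ψ − D_a ψ̄ γ_b ψ − D_b ψ̄ γ_a ψ) s − ½ ℓ g_{ab}, U^a_b := ℓ δ^a_b − (i/2)(ψ̄ γ^a D_b ψ − D_b ψ̄ γ^a ψ) s, and U_{ab} := Σ_c g_{ac} U^c_b. Then: (i) identically, U_{ab} + U_{ba} = −2 T_{ab} + ℓ g_{ab}; (ii) if moreover the Dirac equations Σ_a γ^a D_a ψ = −iμ ψ and Σ_a D_a ψ̄ γ^a = iμ ψ̄ hold, then ℓ = 0 and hence U_{ab} + U_{ba} = −2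 T_{ab}. -/
import Mathlib


open Matrix

/-- Pointwise relation between the canonical energy-tensor `U` and the metric stress-energy
tensor `T` of a Dirac field: (i) identically, `U_{ab} + U_{ba} = −2 T_{ab} + ℓ g_{ab}`;
(ii) on the Dirac equations, `ℓ = 0` and hence `U_{ab} + U_{ba} = −2 T_{ab}`.
Here `g` is a symmetric invertible real `m × m` matrix with inverse entries `g^{ab}`, `s > 0`
plays the role of `√|det g|`, `μ` is the mass, `γ_a` are the Dirac matrices,
`γ^a := Σ_b g^{ab} γ_b`, and `ψ`, `ψ̄`, `D_a ψ`, `D_a ψ̄` are arbitrary values of the spinor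
field, its adjoint (treated as independent), and their covariant derivatives; expressions like
`ψ̄ γ_a D_b ψ` are scalars obtained by row-matrix-column multiplication. -/
theorem dirac_energy_tensor_vs_stress_energy_tensor
    (m N : ℕ) (hm : 1 ≤ m) (hN : 1 ≤ N)
    (g : Matrix (Fin m) (Fin m) ℝ) (hgsym : g.IsSymm) (hginv : IsUnit g.det)
    (s : ℝ) (hs : 0 < s) (μ : ℂ)
    (γ : Fin m → Matrix (Fin N) (Fin N) ℂ)
    (ψ ψb : Fin N → ℂ) (Dψ Dψb : Fin m → Fin N → ℂ) :
    let gi : Matrix (Fin m) (Fin m) ℝ := g⁻¹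
    let γup : Fin m → Matrix (Fin N) (Fin N) ℂ := fun a => ∑ b, (gi a b : ℂ) • γ b
    -- `pair u M v = Σ_{α,β} u_α M_{αβ} v_β`
    let pair : (Fin N → ℂ) → Matrix (Fin N) (Fin N) ℂ → (Fin N → ℂ) → ℂ := fun u M v =>
      ∑ α, ∑ β, u α * M α β * v β
    let ℓ : ℂ := ((Complex.I / 2) *
        (∑ a, ∑ b, (gi a b : ℂ) * (pair ψb (γ a) (Dψ b) - pair (Dψb a) (γ b) ψ))
      - μ * ∑ α, ψb α * ψ α) * (s : ℂ)
    let Tt : Fin m → Fin m → ℂ := fun a b =>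
      (Complex.I / 4) * (pair ψb (γ a) (Dψ b) + pair ψb (γ b) (Dψ a)
          - pair (Dψb a) (γ b) ψ - pair (Dψb b) (γ a) ψ) * (s : ℂ)
        - (1 / 2) * ℓ * (g a b : ℂ)
    let Uup : Fin m → Fin m → ℂ := fun a b =>
      ℓ * (if a = b then 1 else 0)
        - (Complex.I / 2) * (pair ψb (γup a) (Dψ b) - pair (Dψb b) (γup a) ψ) * (s : ℂ)
    let Ul : Fin m → Fin m → ℂ := fun a b => ∑ c, (g a c : ℂ) * Uup c b
    -- (i) identically:
    (∀ a b : Fin m, Ul a b + Ul b a = -2 * Tt a b + ℓ * (g a b : ℂ)) ∧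
    -- (ii) on the Dirac equations:
    ((∀ α, (∑ a, ∑ β, γup a α β * Dψ a β) = -Complex.I * μ * ψ α) →
     (∀ α, (∑ a, ∑ β, Dψb a β * γup a β α) = Complex.I * μ * ψb α) →
      ℓ = 0 ∧ ∀ a b : Fin m, Ul a b + Ul b a = -2 * Tt a b) := by
  intro gi γup pair ℓ Tt Uup Ul
  have hdel : ∀ a d : Fin m, (∑ c, (g a c : ℂ) * (gi c d : ℂ)) = if a = d then 1 else 0 := by
    intro a d
    have h2 : (g * g⁻¹) a d = (1 : Matrix (Fin m) (Fin m) ℝ) a d := by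
      rw [Matrix.mul_nonsing_inv g hginv]
    simp only [Matrix.mul_apply, Matrix.one_apply] at h2
    calc (∑ c, (g a c : ℂ) * (gi c d : ℂ)) = ((∑ c, g a c * (g⁻¹) c d : ℝ) : ℂ) := by
          push_cast; rfl
      _ = _ := by rw [h2]; split_ifs <;> simp
  have hgis : ∀ a b : Fin m, gi a b = gi b a := by
    intro a b
    have h : (g⁻¹)ᵀ = g⁻¹ := by rw [Matrix.transpose_nonsing_inv, hgsym.eq]
    show (g⁻¹) a b = (g⁻¹) b a
    conv_lhs => rw [← h]
    rfl
  have hgs : ∀ a b : Fin m, g a b = g b a := by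
    intro a b
    conv_lhs => rw [← hgsym.eq]
    rfl
  have hpairup : ∀ (c : Fin m) (u v : Fin N → ℂ),
      pair u (γup c) v = ∑ d, (gi c d : ℂ) * pair u (γ d) v := by
    intro c u v
    show (∑ α, ∑ β, u α * (∑ d, (gi c d : ℂ) • γ d) α β * v β)
        = ∑ d, (gi c d : ℂ) * ∑ α, ∑ β, u α * (γ d) α β * v β
    have h1 : ∀ α β, u α * (∑ d, (gi c d : ℂ) • γ d) α β * v β
        = ∑ d, (gi c d : ℂ) * (u α * (γ d) α β * v β) := by
      intro α β
      simp only [Matrix.sum_apply, Matrix.smul_apply, smul_eq_mul, Finset.sum_mul,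
        Finset.mul_sum]
      exact Finset.sum_congr rfl fun d _ => by ring
    simp only [h1]
    calc (∑ α, ∑ β, ∑ d, (gi c d : ℂ) * (u α * (γ d) α β * v β))
        = ∑ α, ∑ d, ∑ β, (gi c d : ℂ) * (u α * (γ d) α β * v β) :=
          Finset.sum_congr rfl fun α _ => Finset.sum_comm
      _ = ∑ d, ∑ α, ∑ β, (gi c d : ℂ) * (u α * (γ d) α β * v β) := Finset.sum_comm
      _ = _ := by simp [Finset.mul_sum]
  have hcontr : ∀ (a : Fin m) (u v : Fin N → ℂ),
      (∑ c, (g a c : ℂ) * pair u (γup c) v) = pair u (γ a) v := by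
    intro a u v
    simp only [hpairup]
    calc (∑ c, (g a c : ℂ) * ∑ d, (gi c d : ℂ) * pair u (γ d) v)
        = ∑ c, ∑ d, ((g a c : ℂ) * (gi c d : ℂ)) * pair u (γ d) v := by
          simp [Finset.mul_sum, mul_assoc]
      _ = ∑ d, (∑ c, (g a c : ℂ) * (gi c d : ℂ)) * pair u (γ d) v := by
          rw [Finset.sum_comm]
          exact Finset.sum_congr rfl fun d _ => (Finset.sum_mul _ _ _).symm
      _ = _ := by simp [hdel, ite_mul]
  have hU : ∀ a b : Fin m, Ul a b = ℓ * (g a b : ℂ)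
      - (Complex.I / 2) * (pair ψb (γ a) (Dψ b) - pair (Dψb b) (γ a) ψ) * (s : ℂ) := by
    intro a b
    show (∑ c, (g a c : ℂ) * (ℓ * (if c = b then 1 else 0)
        - (Complex.I / 2) * (pair ψb (γup c) (Dψ b) - pair (Dψb b) (γup c) ψ) * (s : ℂ))) = _
    have expand : ∀ c, (g a c : ℂ) * (ℓ * (if c = b then 1 else 0)
        - (Complex.I / 2) * (pair ψb (γup c) (Dψ b) - pair (Dψb b) (γup c) ψ) * (s : ℂ))
      = ℓ * ((g a c : ℂ) * (if c = b then 1 else 0))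
        - (Complex.I / 2 * (s : ℂ)) * ((g a c : ℂ) * pair ψb (γup c) (Dψ b))
        + (Complex.I / 2 * (s : ℂ)) * ((g a c : ℂ) * pair (Dψb b) (γup c) ψ) := by
      intro c; ring
    simp only [expand, Finset.sum_add_distrib, Finset.sum_sub_distrib, ← Finset.mul_sum]
    rw [hcontr, hcontr]
    rw [show (∑ c, (g a c : ℂ) * (if c = b then 1 else 0)) = (g a b : ℂ) by
      simp [mul_ite, Finset.sum_ite_eq]]
    ring
  have part1 : ∀ a b : Fin m, Ul a b + Ul b a = -2 * Tt a b + ℓ * (g a b : ℂ) := by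
    intro a b
    rw [hU a b, hU b a]
    show _ = -2 * ((Complex.I / 4) * (pair ψb (γ a) (Dψ b) + pair ψb (γ b) (Dψ a)
          - pair (Dψb a) (γ b) ψ - pair (Dψb b) (γ a) ψ) * (s : ℂ)
        - (1 / 2) * ℓ * (g a b : ℂ)) + ℓ * (g a b : ℂ)
    rw [show ((g b a : ℝ) : ℂ) = ((g a b : ℝ) : ℂ) by rw [hgs a b]]
    ring
  refine ⟨part1, fun hD hDb => ?_⟩
  have key : (∑ a, ∑ b, (gi a b : ℂ) * (pair ψb (γ a) (Dψ b) - pair (Dψb a) (γ b) ψ))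
      = -Complex.I * μ * (∑ α, ψb α * ψ α) - Complex.I * μ * (∑ α, ψb α * ψ α) := by
    have e1 : (∑ a, ∑ b, (gi a b : ℂ) * pair ψb (γ a) (Dψ b))
        = ∑ b, pair ψb (γup b) (Dψ b) := by
      rw [Finset.sum_comm]
      refine Finset.sum_congr rfl fun b _ => ?_
      rw [hpairup]
      exact Finset.sum_congr rfl fun a _ => by rw [hgis a b]
    have e2 : (∑ a, ∑ b, (gi a b : ℂ) * pair (Dψb a) (γ b) ψ)
        = ∑ a, pair (Dψb a) (γup a) ψ :=
      Finset.sum_congr rfl fun a _ => (hpairup a _ _).symm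
    have e3 : (∑ b, pair ψb (γup b) (Dψ b)) = -Complex.I * μ * (∑ α, ψb α * ψ α) := by
      show (∑ b, ∑ α, ∑ β, ψb α * (γup b) α β * Dψ b β) = _
      rw [Finset.sum_comm, Finset.mul_sum]
      refine Finset.sum_congr rfl fun α _ => ?_
      have hI : (∑ b, ∑ β, ψb α * (γup b) α β * Dψ b β)
          = ψb α * (∑ b, ∑ β, (γup b) α β * Dψ b β) := by
        rw [Finset.mul_sum]
        refine Finset.sum_congr rfl fun b _ => ?_
        rw [Finset.mul_sum]
        exact Finset.sum_congr rfl fun β _ => by ring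
      rw [hI, hD α]; ring
    have e4 : (∑ a, pair (Dψb a) (γup a) ψ) = Complex.I * μ * (∑ α, ψb α * ψ α) := by
      show (∑ a, ∑ α, ∑ β, Dψb a α * (γup a) α β * ψ β) = _
      have swap : ∀ a : Fin m, (∑ α, ∑ β, Dψb a α * (γup a) α β * ψ β)
          = ∑ β, (∑ α, Dψb a α * (γup a) α β) * ψ β := by
        intro a
        rw [Finset.sum_comm]
        exact Finset.sum_congr rfl fun β _ => (Finset.sum_mul _ _ _).symm
      simp only [swap]
      rw [Finset.sum_comm, Finset.mul_sum]
      refine Finset.sum_congr rfl fun β _ => ?_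
      rw [← Finset.sum_mul, show (∑ a, ∑ α, Dψb a α * (γup a) α β)
          = Complex.I * μ * ψb β from hDb β]
      ring
    simp only [mul_sub, Finset.sum_sub_distrib]
    rw [e1, e2, e3, e4]
  have hℓ : ℓ = 0 := by
    show ((Complex.I / 2) *
        (∑ a, ∑ b, (gi a b : ℂ) * (pair ψb (γ a) (Dψ b) - pair (Dψb a) (γ b) ψ))
      - μ * ∑ α, ψb α * ψ α) * (s : ℂ) = 0
    rw [key]
    linear_combination (-μ * (∑ α, ψb α * ψ α) * (s : ℂ)) * Complex.I_mul_I
  refine ⟨hℓ, fun a b => ?_⟩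
  rw [part1 a b, hℓ]
  ring
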